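/- Let G be a finite connected graph that is [p]-edge geodetic and H a finite connected graph that is [q]-edge geodetic, with p ≤ q, so that the strong product G ⊠ H is [p]-edge geodetic. Then |gen(G ⊠ H)| ≤ |V(H)|·|gen(G)| + |V(G)|·|E(H)| + 2·|gen(G)|·|E(H)|, where |gen(·)| denotes the minimum number of geodesics of the respective maximal length covering all edges of the respective graph. -/

import Mathlib

open SimpleGraph

/-- A walk is a `k`-geodesic if it has length `k` and is a shortest path
between its endpoints. -/
def IsKGeodesic {V : Type*} (G : SimpleGraph V) (k : ℕ) {u v : V} (w : G.Walk u v) : Prop :=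
  w.length = k ∧ G.dist u v = k

/-- A graph is `k`-edge geodetic if every edge lies on some `k`-geodesic. -/
def IsEdgeGeodetic {V : Type*} (G : SimpleGraph V) (k : ℕ) : Prop :=
  ∀ e ∈ G.edgeSet, ∃ (u v : V) (w : G.Walk u v), IsKGeodesic G k w ∧ e ∈ w.edges

/-- A graph is `[k]`-edge geodetic if it is `k`-edge geodetic but not `(k+1)`-edge geodetic. -/
def IsMaxEdgeGeodetic {V : Type*} (G : SimpleGraph V) (k : ℕ) : Prop :=
  IsEdgeGeodetic G k ∧ ¬ IsEdgeGeodetic G (k + 1)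

/-- `genNum G k` is the minimum number of `k`-geodesics of `G` whose edges
together cover all edges of `G`. -/
noncomputable def genNum {V : Type*} (G : SimpleGraph V) (k : ℕ) : ℕ :=
  sInf {r : ℕ | ∃ f : Fin r → Σ u : V, Σ v : V, G.Walk u v,
    (∀ i, IsKGeodesic G k (f i).2.2) ∧
    ∀ e ∈ G.edgeSet, ∃ i, e ∈ (f i).2.2.edges}

/-- The strong product of two simple graphs. -/
def strongProd {α β : Type*} (G : SimpleGraph α) (H : SimpleGraph β) :
    SimpleGraph (α × β) where
  Adj x y := (x.1 = y.1 ∧ H.Adj x.2 y.2) ∨ (x.2 = y.2 ∧ G.Adj x.1 y.1) ∨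
    (G.Adj x.1 y.1 ∧ H.Adj x.2 y.2)
  symm := by
    constructor
    rintro ⟨a₁, b₁⟩ ⟨a₂, b₂⟩ (⟨h, h'⟩ | ⟨h, h'⟩ | ⟨h, h'⟩)
    · exact Or.inl ⟨h.symm, h'.symm⟩
    · exact Or.inr (Or.inl ⟨h.symm, h'.symm⟩)
    · exact Or.inr (Or.inr ⟨h.symm, h'.symm⟩)
  loopless := by
    constructor
    rintro ⟨a, b⟩ (⟨_, h⟩ | ⟨_, h⟩ | ⟨h, _⟩) <;> exact h.ne rfl

section Aux
variable {α β : Type*} {G : SimpleGraph α} {H : SimpleGraph β}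

lemma dist_fst_le (hGc : G.Connected) : ∀ {x y : α × β}
    (W : (strongProd G H).Walk x y), G.dist x.1 y.1 ≤ W.length := by
  intro x y W
  induction W with
  | nil => simp
  | @cons u m y a w ih =>
    rw [Walk.length_cons]
    rcases a with ⟨he, _⟩ | ⟨_, hadj⟩ | ⟨hadj, _⟩
    · rw [he]; omega
    · have h1 : G.dist u.1 m.1 ≤ 1 := by
        simpa using SimpleGraph.dist_le (Walk.cons hadj Walk.nil)
      have := hGc.dist_triangle (u := u.1) (v := m.1) (w := y.1)
      omega
    · have h1 : G.dist u.1 m.1 ≤ 1 := by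
        simpa using SimpleGraph.dist_le (Walk.cons hadj Walk.nil)
      have := hGc.dist_triangle (u := u.1) (v := m.1) (w := y.1)
      omega

lemma dist_snd_le (hHc : H.Connected) : ∀ {x y : α × β}
    (W : (strongProd G H).Walk x y), H.dist x.2 y.2 ≤ W.length := by
  intro x y W
  induction W with
  | nil => simp
  | @cons u m y a w ih =>
    rw [Walk.length_cons]
    rcases a with ⟨_, hadj⟩ | ⟨he, _⟩ | ⟨_, hadj⟩
    · have h1 : H.dist u.2 m.2 ≤ 1 := by
        simpa using SimpleGraph.dist_le (Walk.cons hadj Walk.nil)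
      have := hHc.dist_triangle (u := u.2) (v := m.2) (w := y.2)
      omega
    · rw [he]; omega
    · have h1 : H.dist u.2 m.2 ≤ 1 := by
        simpa using SimpleGraph.dist_le (Walk.cons hadj Walk.nil)
      have := hHc.dist_triangle (u := u.2) (v := m.2) (w := y.2)
      omega

lemma isGeo_of_fst (hGc : G.Connected) {x y : α × β} (W : (strongProd G H).Walk x y)
    (h : G.dist x.1 y.1 = W.length) : (strongProd G H).dist x y = W.length := by
  refine le_antisymm (SimpleGraph.dist_le W) ?_
  obtain ⟨W', hW'⟩ := SimpleGraph.Reachable.exists_walk_length_eq_dist ⟨W⟩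
  calc W.length = G.dist x.1 y.1 := h.symm
    _ ≤ W'.length := dist_fst_le hGc W'
    _ = _ := hW'

lemma isGeo_of_snd (hHc : H.Connected) {x y : α × β} (W : (strongProd G H).Walk x y)
    (h : H.dist x.2 y.2 = W.length) : (strongProd G H).dist x y = W.length := by
  refine le_antisymm (SimpleGraph.dist_le W) ?_
  obtain ⟨W', hW'⟩ := SimpleGraph.Reachable.exists_walk_length_eq_dist ⟨W⟩
  calc W.length = H.dist x.2 y.2 := h.symm
    _ ≤ W'.length := dist_snd_le hHc W'
    _ = _ := hW'

lemma exists_sub_geodesic {V : Type*} {K : SimpleGraph V} (hc : K.Connected) :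
    ∀ n p, p ≤ n → ∀ {u v : V} (w : K.Walk u v), w.length = n → K.dist u v = n →
      ∀ e ∈ w.edges, 1 ≤ p →
      ∃ (x y : V) (w' : K.Walk x y), w'.length = p ∧ K.dist x y = p ∧ e ∈ w'.edges := by
  intro n
  induction n using Nat.strong_induction_on with
  | _ n ih =>
    intro p hp u v w hlen hdist e he hp1
    rcases eq_or_lt_of_le hp with rfl | hlt
    · exact ⟨u, v, w, hlen, hdist, he⟩
    · have hn1 : 1 ≤ n := by omega
      cases w with
      | nil => simp at hlen; omega
      | @cons _ m _ a w' =>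
        have hlen' : w'.length = n - 1 := by
          rw [Walk.length_cons] at hlen; omega
        have hd1 : K.dist u m ≤ 1 := by
          simpa using SimpleGraph.dist_le (Walk.cons a Walk.nil)
        have htri := hc.dist_triangle (u := u) (v := m) (w := v)
        have hdist' : K.dist m v = n - 1 := by
          have h2 : K.dist m v ≤ n - 1 := hlen' ▸ SimpleGraph.dist_le w'
          omega
        by_cases hew : e ∈ w'.edges
        · exact ih (n - 1) (by omega) p (by omega) w' hlen' hdist' e hew hp1
        · have he0 : e = s(u, m) := by
            have he' := he
            rw [Walk.edges_cons, List.mem_cons] at he'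
            exact he'.resolve_right hew
          have hwlen : 1 ≤ w'.length := by omega
          have hvu : v ≠ u := by
            intro h; subst h; rw [SimpleGraph.dist_self] at hdist; omega
          obtain ⟨m', b, r', hr⟩ :=
            Walk.exists_eq_cons_of_ne hvu (Walk.cons a w').reverse
          have hrevlen : (Walk.cons a w').reverse.length = n := by
            rw [Walk.length_reverse]; exact hlen
          have hrlen : r'.length = n - 1 := by
            rw [hr, Walk.length_cons] at hrevlen; omega
          have hd1' : K.dist v m' ≤ 1 := by
            simpa using SimpleGraph.dist_le (Walk.cons b Walk.nil)
          have htri' := hc.dist_triangle (u := v) (v := m') (w := u)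
          have hdistvu : K.dist v u = n := by rw [SimpleGraph.dist_comm]; exact hdist
          have hrdist : K.dist m' u = n - 1 := by
            have h2 : K.dist m' u ≤ n - 1 := hrlen ▸ SimpleGraph.dist_le r'
            omega
          have her : e ∈ r'.edges := by
            have hedges : (Walk.cons a w').reverse.edges = w'.edges.reverse ++ [e] := by
              rw [Walk.edges_reverse, Walk.edges_cons, he0]
              simp
            rw [hr, Walk.edges_cons] at hedges
            have hne : w'.edges.reverse ≠ [] := by
              simp only [ne_eq, List.reverse_eq_nil_iff]
              intro hnil
              have := w'.length_edges
              rw [hnil] at this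
              simp at this; omega
            obtain ⟨c, t, hct⟩ := List.exists_cons_of_ne_nil hne
            rw [hct] at hedges
            simp only [List.cons_append, List.cons.injEq] at hedges
            rw [hedges.2]
            simp
          exact ih (n - 1) (by omega) p (by omega) r' hrlen hrdist e her hp1

def zend {u v : α} : G.Walk u v → β → β → β
  | .nil, h, _ => h
  | .cons _ w, h, h' => zend w h' h

def zig : {u v : α} → (P : G.Walk u v) → (h h' : β) → H.Adj h h' →
    (strongProd G H).Walk (u, h) (v, zend P h h')
  | _, _, .nil, _, _, _ => .nil
  | _, _, .cons a w, _, _, hd => .cons (Or.inr (Or.inr ⟨a, hd⟩)) (zig w _ _ hd.symm)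

lemma zig_length : ∀ {u v : α} (P : G.Walk u v) (h h' : β) (hd : H.Adj h h'),
    (zig P h h' hd).length = P.length
  | _, _, .nil, _, _, _ => rfl
  | _, _, .cons a w, h, h', hd => by
    show (zig w h' h hd.symm).length + 1 = w.length + 1
    rw [zig_length w h' h hd.symm]

lemma zig_cover : ∀ {u v : α} (P : G.Walk u v) (h h' : β) (hd : H.Adj h h') (x y : α),
    s(x, y) ∈ P.edges →
    s((x, h), (y, h')) ∈ (zig P h h' hd).edges ∨
      s((x, h), (y, h')) ∈ (zig P h' h hd.symm).edges
  | _, _, .nil, _, _, _, x, y, hxy => by simp [Walk.edges_nil] at hxy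
  | u, v, .cons (v := m) a w, h, h', hd, x, y, hxy => by
    rw [Walk.edges_cons, List.mem_cons] at hxy
    rcases hxy with hxy | hxy
    · rw [Sym2.eq_iff] at hxy
      rcases hxy with ⟨rfl, rfl⟩ | ⟨rfl, rfl⟩
      · left; exact List.mem_cons.2 (Or.inl rfl)
      · right
        simp only [zig, Walk.edges_cons, List.mem_cons]
        exact List.mem_cons.2 (Or.inl Sym2.eq_swap)
    · have hxy' : s(y, x) ∈ w.edges := by rwa [Sym2.eq_swap] at hxy
      rcases zig_cover w h' h hd.symm y x hxy' with hmem | hmem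
      · left
        simp only [zig, Walk.edges_cons, List.mem_cons]
        right
        rwa [Sym2.eq_swap] at hmem
      · right
        simp only [zig, Walk.edges_cons, List.mem_cons]
        right
        rwa [Sym2.eq_swap] at hmem

def liftGHom (G : SimpleGraph α) (H : SimpleGraph β) (h : β) : G →g strongProd G H :=
  ⟨fun g => (g, h), fun a => Or.inr (Or.inl ⟨rfl, a⟩)⟩

def liftHHom (G : SimpleGraph α) (H : SimpleGraph β) (g : α) : H →g strongProd G H :=
  ⟨fun y => (g, y), fun a => Or.inl ⟨rfl, a⟩⟩

end Aux

lemma genNum_le' {V : Type*} (G : SimpleGraph V) (k : ℕ) {ι : Type*} [Finite ι]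
    (f : ι → Σ u : V, Σ v : V, G.Walk u v)
    (hg : ∀ i, IsKGeodesic G k (f i).2.2)
    (hcov : ∀ e ∈ G.edgeSet, ∃ i, e ∈ (f i).2.2.edges) :
    genNum G k ≤ Nat.card ι := by
  apply Nat.sInf_le
  refine ⟨fun j => f ((Finite.equivFin ι).symm j), fun j => hg _, fun e he => ?_⟩
  obtain ⟨i, hi⟩ := hcov e he
  refine ⟨Finite.equivFin ι i, ?_⟩
  show e ∈ (f ((Finite.equivFin ι).symm ((Finite.equivFin ι) i))).2.2.edges
  rw [Equiv.symm_apply_apply]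
  exact hi

/-- If `G` is a finite connected `[p]`-edge geodetic graph and `H` is a finite connected
`[q]`-edge geodetic graph with `p ≤ q` (so that `G ⊠ H` is `[p]`-edge geodetic), then
`|gen(G ⊠ H)| ≤ |V(H)|·|gen(G)| + |V(G)|·|E(H)| + 2·|gen(G)|·|E(H)|`. -/
theorem strongProd_genNum_le {α β : Type*} [Fintype α] [Fintype β]
    (G : SimpleGraph α) (H : SimpleGraph β) (hGc : G.Connected) (hHc : H.Connected)
    (p q : ℕ) (hG : IsMaxEdgeGeodetic G p) (hH : IsMaxEdgeGeodetic H q) (hpq : p ≤ q) :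
    genNum (strongProd G H) p ≤
      Fintype.card β * genNum G p + Fintype.card α * Nat.card H.edgeSet +
        2 * genNum G p * Nat.card H.edgeSet := by
  classical
  have hGE : ∃ e, e ∈ G.edgeSet := by
    by_contra h
    push_neg at h
    exact hG.2 fun e he => absurd he (h e)
  have hp1 : 1 ≤ p := by
    obtain ⟨eG, heG⟩ := hGE
    obtain ⟨u, v, w, ⟨hl, _⟩, hew⟩ := hG.1 eG heG
    by_contra h
    have hp0 : p = 0 := by omega
    have h0 : w.edges.length = 0 := by rw [w.length_edges, hl, hp0]
    rw [List.length_eq_zero_iff] at h0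
    rw [h0] at hew
    simp at hew
  have hne : {r : ℕ | ∃ f : Fin r → Σ u : α, Σ v : α, G.Walk u v,
      (∀ i, IsKGeodesic G p (f i).2.2) ∧
      ∀ e ∈ G.edgeSet, ∃ i, e ∈ (f i).2.2.edges}.Nonempty := by
    choose u v w hw hmem using fun e : G.edgeSet => hG.1 e.1 e.2
    refine ⟨Nat.card G.edgeSet,
      fun j => ⟨u ((Finite.equivFin G.edgeSet).symm j),
        v ((Finite.equivFin G.edgeSet).symm j),
        w ((Finite.equivFin G.edgeSet).symm j)⟩,
      fun j => hw _, fun e he => ?_⟩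
    refine ⟨Finite.equivFin G.edgeSet ⟨e, he⟩, ?_⟩
    show e ∈ (w ((Finite.equivFin G.edgeSet).symm
      ((Finite.equivFin G.edgeSet) ⟨e, he⟩))).edges
    rw [Equiv.symm_apply_apply]
    exact hmem ⟨e, he⟩
  obtain ⟨f₀, hf₀g, hf₀c⟩ := Nat.sInf_mem hne
  set a := genNum G p with ha
  have hHp : ∀ e : H.edgeSet, ∃ (x y : β) (w : H.Walk x y),
      w.length = p ∧ H.dist x y = p ∧ e.1 ∈ w.edges := by
    rintro ⟨e, he⟩
    obtain ⟨x, y, w, ⟨hl, hd⟩, hew⟩ := hH.1 e he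
    exact exists_sub_geodesic hHc q p hpq w hl hd e hew hp1
  choose xh yh wh hwl hwd hwe using hHp
  let ι := (β × Fin a) ⊕ (α × H.edgeSet) ⊕ (Fin a × H.Dart)
  let F : ι → Σ u : α × β, Σ v : α × β, (strongProd G H).Walk u v := fun i =>
    match i with
    | Sum.inl (b, i) =>
        ⟨((f₀ i).1, b), ((f₀ i).2.1, b), (f₀ i).2.2.map (liftGHom G H b)⟩
    | Sum.inr (Sum.inl (g, e)) =>
        ⟨(g, xh e), (g, yh e), (wh e).map (liftHHom G H g)⟩
    | Sum.inr (Sum.inr (i, d)) =>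
        ⟨((f₀ i).1, d.fst), ((f₀ i).2.1, zend (f₀ i).2.2 d.fst d.snd),
          zig (f₀ i).2.2 d.fst d.snd d.adj⟩
  have hFg : ∀ i, IsKGeodesic (strongProd G H) p (F i).2.2 := by
    rintro (⟨b, i⟩ | ⟨g, e⟩ | ⟨i, d⟩)
    · obtain ⟨hl, hd⟩ := hf₀g i
      have hlen : ((f₀ i).2.2.map (liftGHom G H b)).length = p := by
        rw [Walk.length_map]; exact hl
      exact ⟨hlen, (isGeo_of_fst hGc _ (hd.trans hlen.symm)).trans hlen⟩
    · have hlen : ((wh e).map (liftHHom G H g)).length = p := by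
        rw [Walk.length_map]; exact hwl e
      exact ⟨hlen, (isGeo_of_snd hHc _ ((hwd e).trans hlen.symm)).trans hlen⟩
    · obtain ⟨hl, hd⟩ := hf₀g i
      have hlen : (zig (f₀ i).2.2 d.fst d.snd d.adj).length = p := by
        rw [zig_length]; exact hl
      exact ⟨hlen, (isGeo_of_fst hGc _ (hd.trans hlen.symm)).trans hlen⟩
  have hFc : ∀ e ∈ (strongProd G H).edgeSet, ∃ i, e ∈ (F i).2.2.edges := by
    intro e he
    induction e using Sym2.ind with
    | _ x y =>
      rw [mem_edgeSet] at he
      obtain ⟨x₁, x₂⟩ := x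
      obtain ⟨y₁, y₂⟩ := y
      rcases he with ⟨h1, h2⟩ | ⟨h1, h2⟩ | ⟨h1, h2⟩
      · dsimp only at h1 h2
        subst h1
        refine ⟨Sum.inr (Sum.inl (x₁, ⟨s(x₂, y₂), h2⟩)), ?_⟩
        show s((x₁, x₂), (x₁, y₂)) ∈ ((wh _).map (liftHHom G H x₁)).edges
        rw [Walk.edges_map]
        exact List.mem_map_of_mem (hwe _)
      · dsimp only at h1 h2
        subst h1
        obtain ⟨i, hi⟩ := hf₀c s(x₁, y₁) h2
        refine ⟨Sum.inl (x₂, i), ?_⟩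
        show s((x₁, x₂), (y₁, x₂)) ∈ ((f₀ i).2.2.map (liftGHom G H x₂)).edges
        rw [Walk.edges_map]
        exact List.mem_map_of_mem hi
      · dsimp only at h1 h2
        obtain ⟨i, hi⟩ := hf₀c s(x₁, y₁) h1
        rcases zig_cover (f₀ i).2.2 x₂ y₂ h2 x₁ y₁ hi with hm | hm
        · exact ⟨Sum.inr (Sum.inr (i, ⟨(x₂, y₂), h2⟩)), hm⟩
        · exact ⟨Sum.inr (Sum.inr (i, ⟨(y₂, x₂), h2.symm⟩)), hm⟩
  have hdart' : Fintype.card H.Dart = 2 * Fintype.card H.edgeSet := by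
    rw [SimpleGraph.dart_card_eq_twice_card_edges, SimpleGraph.edgeFinset_card]
  have hcard : Nat.card ι =
      Fintype.card β * a + Fintype.card α * Nat.card H.edgeSet +
        2 * a * Nat.card H.edgeSet := by
    simp only [ι, Nat.card_eq_fintype_card, Fintype.card_sum, Fintype.card_prod,
      Fintype.card_fin, hdart']
    ring
  calc genNum (strongProd G H) p ≤ Nat.card ι := genNum_le' _ _ F hFg hFc
    _ = _ := hcard
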